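/- arXiv:1806.05515 — 2 statements merged into one kernel-verified Lean document; each statement's English description precedes it below -/
import Mathlib

section
/- For all nonnegative integers n and k, Ê_n^{(−k)} = ∑_{j=0}^{min(n,k)} (j!)² · ∑_{m=0}^{n} ∑_{μ=0}^{k} C(n,m) · C(k,μ) · S(n−m, j) · S(μ, j) · 4^{n−m} · (3^m + 1)/2. In particular, Ê_n^{(−k)} is a nonnegative integer. -/
open Finset

/-- Stirling numbers of the second kind (as rationals),
`S(n,j) = (1/j!) ∑_{i=0}^{j} (-1)^{j-i} C(j,i) i^n`. -/
def stirling2 (n j : ℕ) : ℚ :=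
  (1 / j.factorial) *
    ∑ i ∈ Finset.range (j + 1), (-1) ^ (j - i) * (j.choose i : ℚ) * (i : ℚ) ^ n

/-- The numerator sum: `fs n j = j! * stirling2 n j`. -/
def fs (n j : ℕ) : ℚ :=
  ∑ i ∈ Finset.range (j + 1), (-1) ^ (j - i) * (j.choose i : ℚ) * (i : ℚ) ^ n

lemma stirling2_eq_fs (n j : ℕ) : stirling2 n j = fs n j / j.factorial := by
  rw [stirling2, fs]; ring

lemma neg_one_pow_sub {i j : ℕ} (h : i ≤ j) : ((-1 : ℚ)) ^ (j - i) = (-1) ^ j * (-1) ^ i := by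
  have h1 : ((-1 : ℚ)) ^ (j - i) * (-1) ^ i = (-1) ^ j := by
    rw [← pow_add, Nat.sub_add_cancel h]
  have h2 : ((-1 : ℚ)) ^ i * (-1) ^ i = 1 := by
    rw [← pow_add, ← two_mul, pow_mul]; norm_num
  calc ((-1 : ℚ)) ^ (j - i) = (-1) ^ (j - i) * ((-1) ^ i * (-1) ^ i) := by rw [h2, mul_one]
    _ = ((-1) ^ (j - i) * (-1) ^ i) * (-1) ^ i := by ring
    _ = (-1) ^ j * (-1) ^ i := by rw [h1]

lemma alt_sum_choose (j : ℕ) :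
    ∑ i ∈ range (j + 1), (-1 : ℚ) ^ i * (j.choose i : ℚ) = if j = 0 then 1 else 0 := by
  have := Int.alternating_sum_range_choose (n := j)
  have h2 : ((∑ m ∈ range (j + 1), ((-1) ^ m * j.choose m : ℤ) : ℤ) : ℚ)
      = ∑ i ∈ range (j + 1), (-1 : ℚ) ^ i * (j.choose i : ℚ) := by push_cast; rfl
  rw [← h2, this]
  split <;> norm_num

lemma fs_zero_left (j : ℕ) : fs 0 j = if j = 0 then 1 else 0 := by
  rw [fs]
  have : ∀ i ∈ range (j + 1), (-1 : ℚ) ^ (j - i) * (j.choose i : ℚ) * (i : ℚ) ^ 0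
      = (-1) ^ j * ((-1) ^ i * (j.choose i : ℚ)) := by
    intro i hi
    rw [mem_range] at hi
    rw [neg_one_pow_sub (Nat.lt_succ_iff.mp hi), pow_zero]
    ring
  rw [sum_congr rfl this, ← mul_sum, alt_sum_choose]
  split
  · next h => subst h; norm_num
  · norm_num

lemma fs_zero_right (n : ℕ) : fs n 0 = if n = 0 then 1 else 0 := by
  rw [fs, sum_range_one]
  split
  · next h => subst h; norm_num
  · next h => simp [zero_pow h]

lemma fs_succ_succ (n j : ℕ) :
    fs (n + 1) (j + 1) = (j + 1 : ℚ) * fs n (j + 1) + (j + 1 : ℚ) * fs n j := by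
  have key : ∀ i ∈ range (j + 2), (-1 : ℚ) ^ (j + 1 - i) * ((j + 1).choose i : ℚ) * (i : ℚ) ^ (n + 1)
      = (j + 1 : ℚ) * ((-1) ^ (j + 1 - i) * ((j + 1).choose i : ℚ) * (i : ℚ) ^ n)
        - (j + 1 : ℚ) * ((-1) ^ (j + 1 - i) * (j.choose i : ℚ) * (i : ℚ) ^ n) := by
    intro i hi
    rw [mem_range, Nat.lt_succ_iff] at hi
    have hnat := Nat.choose_mul_succ_eq j i
    have hcast := congrArg (Nat.cast : ℕ → ℚ) hnat
    push_cast [Nat.cast_sub hi] at hcast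
    have hq : (i : ℚ) * ((j + 1).choose i : ℚ)
        = (j + 1 : ℚ) * ((j + 1).choose i : ℚ) - (j + 1 : ℚ) * (j.choose i : ℚ) := by
      linear_combination hcast
    calc (-1 : ℚ) ^ (j + 1 - i) * ((j + 1).choose i : ℚ) * (i : ℚ) ^ (n + 1)
        = ((i : ℚ) * ((j + 1).choose i : ℚ)) * ((-1) ^ (j + 1 - i) * (i : ℚ) ^ n) := by
          rw [pow_succ]; ring
      _ = _ := by rw [hq]; ring
  have h2 : ∑ i ∈ range (j + 2), (-1 : ℚ) ^ (j + 1 - i) * (j.choose i : ℚ) * (i : ℚ) ^ n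
      = - fs n j := by
    rw [sum_range_succ, Nat.choose_succ_self]
    have h3 : ∀ i ∈ range (j + 1), (-1 : ℚ) ^ (j + 1 - i) * (j.choose i : ℚ) * (i : ℚ) ^ n
        = - ((-1) ^ (j - i) * (j.choose i : ℚ) * (i : ℚ) ^ n) := by
      intro i hi
      rw [mem_range, Nat.lt_succ_iff] at hi
      rw [show j + 1 - i = (j - i) + 1 from by omega, pow_succ]
      ring
    rw [sum_congr rfl h3, sum_neg_distrib]
    simp [fs]
  show (∑ i ∈ range (j + 1 + 1), (-1 : ℚ) ^ (j + 1 - i) * ((j + 1).choose i : ℚ) * (i : ℚ) ^ (n + 1)) = _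
  rw [sum_congr rfl key, sum_sub_distrib, ← mul_sum, ← mul_sum, h2]
  rw [show fs n (j+1) = ∑ i ∈ range (j + 1 + 1), (-1 : ℚ) ^ (j + 1 - i) * ((j + 1).choose i : ℚ) * (i : ℚ) ^ n from rfl]
  ring

/-- Natural-number Stirling numbers of the second kind. -/
def st : ℕ → ℕ → ℕ
  | 0, 0 => 1
  | 0, _ + 1 => 0
  | _ + 1, 0 => 0
  | n + 1, j + 1 => (j + 1) * st n (j + 1) + st n j

lemma fs_eq_st (n j : ℕ) : fs n j = (j.factorial : ℚ) * (st n j : ℚ) := by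
  induction n generalizing j with
  | zero =>
    rw [fs_zero_left]
    cases j with
    | zero => simp [st]
    | succ j => simp [st]
  | succ n ih =>
    cases j with
    | zero => rw [fs_zero_right]; simp [st]
    | succ j =>
      rw [fs_succ_succ, ih, ih, show st (n+1) (j+1) = (j+1) * st n (j+1) + st n j from rfl]
      push_cast [Nat.factorial_succ]
      ring

lemma stirling2_eq_st (n j : ℕ) : stirling2 n j = (st n j : ℚ) := by
  rw [stirling2_eq_fs, fs_eq_st]
  rw [mul_comm, mul_div_assoc, div_self (by exact_mod_cast (Nat.factorial_pos j).ne'), mul_one]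

lemma st_eq_zero {n j : ℕ} (h : n < j) : st n j = 0 := by
  induction n generalizing j with
  | zero => match j, h with
    | j + 1, _ => rfl
  | succ n ih => match j, h with
    | j + 1, h =>
      show (j + 1) * st n (j + 1) + st n j = 0
      rw [ih (by omega), ih (by omega)]; ring

lemma stirling2_eq_zero {n j : ℕ} (h : n < j) : stirling2 n j = 0 := by
  rw [stirling2_eq_st, st_eq_zero h]; norm_num

lemma stirling2_succ_succ (n j : ℕ) :
    stirling2 (n + 1) (j + 1) = (j + 1 : ℚ) * stirling2 n (j + 1) + stirling2 n j := by
  rw [stirling2_eq_st, stirling2_eq_st, stirling2_eq_st,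
    show st (n+1) (j+1) = (j+1) * st n (j+1) + st n j from rfl]
  push_cast; ring

lemma stirling2_zero_zero : stirling2 0 0 = 1 := by rw [stirling2_eq_st]; rfl

lemma stirling2_succ_zero (n : ℕ) : stirling2 (n + 1) 0 = 0 := by rw [stirling2_eq_st]; rfl

lemma qchoose_succ (x j : ℕ) :
    (x : ℚ) * ((j.factorial : ℚ) * (x.choose j : ℚ))
      = (j : ℚ) * (j.factorial : ℚ) * (x.choose j : ℚ)
        + ((j + 1).factorial : ℚ) * (x.choose (j + 1) : ℚ) := by
  rcases le_or_gt j x with h | h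
  · have hnat := Nat.choose_succ_right_eq x j
    have hc := congrArg (Nat.cast : ℕ → ℚ) hnat
    push_cast [Nat.cast_sub h] at hc
    have hf : ((j + 1).factorial : ℚ) = ((j : ℚ) + 1) * (j.factorial : ℚ) := by
      rw [Nat.factorial_succ]; push_cast; ring
    rw [hf]
    linear_combination (-(j.factorial : ℚ)) * hc
  · rw [Nat.choose_eq_zero_of_lt h, Nat.choose_eq_zero_of_lt (by omega)]
    push_cast; ring

lemma pow_eq_sum_stirling (p x : ℕ) :
    (x : ℚ) ^ p = ∑ j ∈ range (p + 1), stirling2 p j * (j.factorial : ℚ) * (x.choose j : ℚ) := by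
  induction p with
  | zero => simp [stirling2_zero_zero]
  | succ p ih =>
    have hA : ∑ j ∈ range (p + 1),
          ((j : ℚ) + 1) * stirling2 p (j + 1) * ((j + 1).factorial : ℚ) * (x.choose (j + 1) : ℚ)
        = ∑ j ∈ range (p + 1), (j : ℚ) * stirling2 p j * (j.factorial : ℚ) * (x.choose j : ℚ) := by
      have h1 := Finset.sum_range_succ'
        (fun j => (j : ℚ) * stirling2 p j * (j.factorial : ℚ) * (x.choose j : ℚ)) (p + 1)
      have h2 := Finset.sum_range_succ
        (fun j => (j : ℚ) * stirling2 p j * (j.factorial : ℚ) * (x.choose j : ℚ)) (p + 1)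
      simp only [Nat.cast_zero, zero_mul, add_zero] at h1
      rw [stirling2_eq_zero (Nat.lt_succ_self p)] at h2
      push_cast at h1 h2 ⊢
      rw [← h1, h2]
      ring
    calc (x : ℚ) ^ (p + 1) = (x : ℚ) * (x : ℚ) ^ p := by ring
      _ = ∑ j ∈ range (p + 1), stirling2 p j * ((x : ℚ) * ((j.factorial : ℚ) * (x.choose j : ℚ))) := by
          rw [ih, mul_sum]; exact sum_congr rfl fun j _ => by ring
      _ = ∑ j ∈ range (p + 1),
            ((j : ℚ) * stirling2 p j * (j.factorial : ℚ) * (x.choose j : ℚ)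
              + stirling2 p j * ((j + 1).factorial : ℚ) * (x.choose (j + 1) : ℚ)) := by
          exact sum_congr rfl fun j _ => by rw [qchoose_succ]; ring
      _ = ∑ j ∈ range (p + 1),
            (((j : ℚ) + 1) * stirling2 p (j + 1) * ((j + 1).factorial : ℚ) * (x.choose (j + 1) : ℚ)
              + stirling2 p j * ((j + 1).factorial : ℚ) * (x.choose (j + 1) : ℚ)) := by
          rw [sum_add_distrib, sum_add_distrib, hA]
      _ = ∑ j ∈ range (p + 1),
            stirling2 (p + 1) (j + 1) * ((j + 1).factorial : ℚ) * (x.choose (j + 1) : ℚ) := by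
          exact sum_congr rfl fun j _ => by rw [stirling2_succ_succ]; ring
      _ = ∑ j ∈ range (p + 2),
            stirling2 (p + 1) j * (j.factorial : ℚ) * (x.choose j : ℚ) := by
          rw [Finset.sum_range_succ'
            (fun j => stirling2 (p + 1) j * (j.factorial : ℚ) * (x.choose j : ℚ)) (p + 1)]
          rw [stirling2_succ_zero]
          simp

lemma pow_eq_sum_stirling' (p x q : ℕ) (h : p ≤ q) :
    (x : ℚ) ^ p = ∑ j ∈ range (q + 1), stirling2 p j * (j.factorial : ℚ) * (x.choose j : ℚ) := by
  rw [pow_eq_sum_stirling]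
  apply Finset.sum_subset (by intro a ha; rw [mem_range] at *; omega)
  intro j _ hj
  rw [mem_range] at hj
  rw [stirling2_eq_zero (by omega)]
  ring

lemma signed_sum_eq (k j : ℕ) :
    ∑ l ∈ range (k + 1),
        (-1 : ℚ) ^ k * (-1) ^ l * (l.factorial : ℚ) * stirling2 k l * (l.choose j : ℚ)
      = (j.factorial : ℚ) * stirling2 (k + 1) (j + 1) := by
  induction k generalizing j with
  | zero =>
    rw [sum_range_one]
    cases j with
    | zero =>
      have h11 : stirling2 1 1 = 1 := by
        rw [show stirling2 1 1 = stirling2 (0 + 1) (0 + 1) from rfl, stirling2_succ_succ,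
          stirling2_eq_zero (by omega), stirling2_zero_zero]
        ring
      simp [stirling2_zero_zero, h11]
    | succ j =>
      rw [stirling2_eq_zero (show 1 < j + 1 + 1 by omega)]
      simp
  | succ k ih =>
    -- the auxiliary function for the shift
    set G : ℕ → ℚ := fun l =>
      (-1 : ℚ) ^ k * (-1) ^ l * (l : ℚ) * (l.factorial : ℚ) * stirling2 k l * (l.choose j : ℚ)
      with hG
    have hG0 : G 0 = 0 := by simp [hG]
    have hGk : G (k + 1) = 0 := by
      simp [hG, stirling2_eq_zero (Nat.lt_succ_self k)]
    have hGshift : ∑ l ∈ range (k + 1), G (l + 1) = ∑ l ∈ range (k + 1), G l := by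
      have h1 := Finset.sum_range_succ' G (k + 1)
      have h2 := Finset.sum_range_succ G (k + 1)
      rw [hG0, add_zero] at h1
      rw [hGk, add_zero] at h2
      rw [← h1, h2]
    have hsplit : ∀ l ∈ range (k + 1),
        (-1 : ℚ) ^ (k + 1) * (-1) ^ (l + 1) * ((l + 1).factorial : ℚ) * stirling2 (k + 1) (l + 1)
            * ((l + 1).choose j : ℚ)
          = (-1 : ℚ) ^ k * (-1) ^ l * (l.factorial : ℚ) * stirling2 k l
              * (((l : ℚ) + 1) * ((l + 1).choose j : ℚ))
            - G (l + 1) := by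
      intro l _
      rw [hG]
      simp only []
      rw [stirling2_succ_succ, Nat.factorial_succ l]
      push_cast
      ring
    have step1 : ∑ l ∈ range (k + 2),
          (-1 : ℚ) ^ (k + 1) * (-1) ^ l * (l.factorial : ℚ) * stirling2 (k + 1) l
            * (l.choose j : ℚ)
        = ∑ l ∈ range (k + 1),
            (-1 : ℚ) ^ k * (-1) ^ l * (l.factorial : ℚ) * stirling2 k l
              * (((l : ℚ) + 1) * ((l + 1).choose j : ℚ) - (l : ℚ) * (l.choose j : ℚ)) := by
      rw [Finset.sum_range_succ'
        (fun l => (-1 : ℚ) ^ (k + 1) * (-1) ^ l * (l.factorial : ℚ) * stirling2 (k + 1) l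
          * (l.choose j : ℚ)) (k + 1)]
      rw [stirling2_succ_zero]
      simp only [mul_zero, zero_mul, add_zero]
      rw [sum_congr rfl hsplit, sum_sub_distrib, hGshift, ← sum_sub_distrib]
      refine sum_congr rfl fun l _ => ?_
      rw [hG]
      ring
    rw [step1]
    cases j with
    | zero =>
      have hbr : ∀ l : ℕ, ((l : ℚ) + 1) * ((l + 1).choose 0 : ℚ) - (l : ℚ) * (l.choose 0 : ℚ)
          = (l.choose 0 : ℚ) := by intro l; simp
      calc ∑ l ∈ range (k + 1),
            (-1 : ℚ) ^ k * (-1) ^ l * (l.factorial : ℚ) * stirling2 k l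
              * (((l : ℚ) + 1) * ((l + 1).choose 0 : ℚ) - (l : ℚ) * (l.choose 0 : ℚ))
          = ∑ l ∈ range (k + 1),
            (-1 : ℚ) ^ k * (-1) ^ l * (l.factorial : ℚ) * stirling2 k l * (l.choose 0 : ℚ) := by
            exact sum_congr rfl fun l _ => by rw [hbr]
        _ = (Nat.factorial 0 : ℚ) * stirling2 (k + 1) (0 + 1) := ih 0
        _ = (Nat.factorial 0 : ℚ) * stirling2 (k + 1 + 1) (0 + 1) := by
            have hrec := stirling2_succ_succ (k + 1) 0
            rw [show stirling2 (k + 1 + 1) (0 + 1) = stirling2 ((k + 1) + 1) (0 + 1) from rfl,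
              hrec, stirling2_succ_zero]
            ring
    | succ j' =>
      have hbr : ∀ l : ℕ, ((l : ℚ) + 1) * ((l + 1).choose (j' + 1) : ℚ)
            - (l : ℚ) * (l.choose (j' + 1) : ℚ)
          = ((j' : ℚ) + 2) * (l.choose (j' + 1) : ℚ) + ((j' : ℚ) + 1) * (l.choose j' : ℚ) := by
        intro l
        have h1 := congrArg (Nat.cast : ℕ → ℚ) (Nat.choose_succ_succ (l) (j'))
        have h2 := congrArg (Nat.cast : ℕ → ℚ) (Nat.add_one_mul_choose_eq l j')
        push_cast at h1 h2
        linear_combination h2 + ((l : ℚ) + (j' : ℚ) + 2) * h1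
      calc ∑ l ∈ range (k + 1),
            (-1 : ℚ) ^ k * (-1) ^ l * (l.factorial : ℚ) * stirling2 k l
              * (((l : ℚ) + 1) * ((l + 1).choose (j' + 1) : ℚ)
                  - (l : ℚ) * (l.choose (j' + 1) : ℚ))
          = ∑ l ∈ range (k + 1),
              (((j' : ℚ) + 2) * ((-1 : ℚ) ^ k * (-1) ^ l * (l.factorial : ℚ) * stirling2 k l
                  * (l.choose (j' + 1) : ℚ))
                + ((j' : ℚ) + 1) * ((-1 : ℚ) ^ k * (-1) ^ l * (l.factorial : ℚ) * stirling2 k l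
                  * (l.choose j' : ℚ))) := by
            exact sum_congr rfl fun l _ => by rw [hbr]; ring
        _ = ((j' : ℚ) + 2) * (((j' + 1).factorial : ℚ) * stirling2 (k + 1) (j' + 1 + 1))
            + ((j' : ℚ) + 1) * ((j'.factorial : ℚ) * stirling2 (k + 1) (j' + 1)) := by
            rw [sum_add_distrib, ← mul_sum, ← mul_sum, ih (j' + 1), ih j']
        _ = ((j' + 1).factorial : ℚ) * stirling2 (k + 1 + 1) (j' + 1 + 1) := by
            have hrec := stirling2_succ_succ (k + 1) (j' + 1)
            rw [show stirling2 (k + 1 + 1) (j' + 1 + 1) = stirling2 ((k + 1) + 1) ((j' + 1) + 1)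
              from rfl, hrec]
            rw [Nat.factorial_succ j']
            push_cast
            ring

lemma stirling2_succ_eq_sum (k j : ℕ) :
    stirling2 (k + 1) (j + 1) = ∑ μ ∈ range (k + 1), (k.choose μ : ℚ) * stirling2 μ j := by
  have hT : fs (k + 1) (j + 1)
      = ((j : ℚ) + 1) *
          ∑ i ∈ range (j + 1), (-1 : ℚ) ^ (j - i) * (j.choose i : ℚ) * ((i : ℚ) + 1) ^ k := by
    rw [show fs (k + 1) (j + 1) = ∑ i ∈ range (j + 1 + 1),
      (-1 : ℚ) ^ (j + 1 - i) * ((j + 1).choose i : ℚ) * (i : ℚ) ^ (k + 1) from rfl]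
    rw [Finset.sum_range_succ'
      (fun i => (-1 : ℚ) ^ (j + 1 - i) * ((j + 1).choose i : ℚ) * (i : ℚ) ^ (k + 1)) (j + 1)]
    simp only [Nat.cast_zero, zero_pow (Nat.succ_ne_zero k), mul_zero, add_zero,
      Nat.succ_sub_succ]
    rw [mul_sum]
    refine sum_congr rfl fun i hi => ?_
    have hc := congrArg (Nat.cast : ℕ → ℚ) (Nat.add_one_mul_choose_eq j i)
    push_cast at hc ⊢
    linear_combination (-((-1 : ℚ) ^ (j - i)) * ((i : ℚ) + 1) ^ k) * hc
  have hb : ∀ i : ℕ, ∑ μ ∈ range (k + 1), (k.choose μ : ℚ) * (i : ℚ) ^ μ = ((i : ℚ) + 1) ^ k := by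
    intro i
    rw [add_pow (i : ℚ) 1 k]
    exact sum_congr rfl fun μ _ => by ring
  have hswap : ∑ μ ∈ range (k + 1), (k.choose μ : ℚ) * fs μ j
      = ∑ i ∈ range (j + 1), (-1 : ℚ) ^ (j - i) * (j.choose i : ℚ) * ((i : ℚ) + 1) ^ k := by
    calc ∑ μ ∈ range (k + 1), (k.choose μ : ℚ) * fs μ j
        = ∑ μ ∈ range (k + 1), ∑ i ∈ range (j + 1),
            (-1 : ℚ) ^ (j - i) * (j.choose i : ℚ) * ((k.choose μ : ℚ) * (i : ℚ) ^ μ) := by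
          refine sum_congr rfl fun μ _ => ?_
          rw [fs, mul_sum]
          exact sum_congr rfl fun i _ => by ring
      _ = ∑ i ∈ range (j + 1), ∑ μ ∈ range (k + 1),
            (-1 : ℚ) ^ (j - i) * (j.choose i : ℚ) * ((k.choose μ : ℚ) * (i : ℚ) ^ μ) :=
          sum_comm
      _ = _ := by
          refine sum_congr rfl fun i _ => ?_
          rw [← mul_sum, hb i]
  have hrhs : ∑ μ ∈ range (k + 1), (k.choose μ : ℚ) * stirling2 μ j
      = (∑ μ ∈ range (k + 1), (k.choose μ : ℚ) * fs μ j) / (j.factorial : ℚ) := by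
    rw [sum_div]
    exact sum_congr rfl fun μ _ => by rw [stirling2_eq_fs]; ring
  rw [stirling2_eq_fs, hT, hrhs, hswap, Nat.factorial_succ]
  push_cast
  rw [mul_div_mul_left _ _ (by positivity : ((j : ℚ) + 1) ≠ 0)]

/-- Poly-Euler numbers of the second kind with negative index `-k`:
`Ê_n^{(-k)} = ((-1)^k/2) ∑_{l=0}^{k} (-1)^l l! S(k,l) ((4l+3)^n + (4l+1)^n)`. -/
def polyEulerSecondNeg (n k : ℕ) : ℚ :=
  ((-1) ^ k / 2) *
    ∑ l ∈ Finset.range (k + 1),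
      (-1) ^ l * (l.factorial : ℚ) * stirling2 k l *
        ((4 * (l : ℚ) + 3) ^ n + (4 * (l : ℚ) + 1) ^ n)

lemma expand_pow (n l : ℕ) :
    (4 * (l : ℚ) + 3) ^ n + (4 * (l : ℚ) + 1) ^ n
      = ∑ m ∈ range (n + 1), (n.choose m : ℚ) * ((3 : ℚ) ^ m + 1) * 4 ^ (n - m) * (l : ℚ) ^ (n - m) := by
  rw [show (4 * (l : ℚ) + 3) = 3 + 4 * l by ring, show (4 * (l : ℚ) + 1) = 1 + 4 * l by ring,
    add_pow, add_pow, ← sum_add_distrib]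
  refine sum_congr rfl fun m _ => ?_
  rw [mul_pow]
  ring

lemma main_identity (n k : ℕ) :
    polyEulerSecondNeg n k =
      ∑ j ∈ Finset.range (min n k + 1),
        (j.factorial : ℚ) ^ 2 *
          ∑ m ∈ Finset.range (n + 1), ∑ μ ∈ Finset.range (k + 1),
            (n.choose m : ℚ) * (k.choose μ : ℚ) * stirling2 (n - m) j * stirling2 μ j *
              (4 ^ (n - m) * (3 ^ m + 1) / 2) := by
  set A : ℕ → ℕ → ℕ → ℚ := fun l m j =>
    ((-1 : ℚ) ^ k * (-1) ^ l * (l.factorial : ℚ) * stirling2 k l * (l.choose j : ℚ))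
      * ((n.choose m : ℚ) * ((3 : ℚ) ^ m + 1) * 4 ^ (n - m) * stirling2 (n - m) j
          * (j.factorial : ℚ) / 2) with hA
  have step1 : polyEulerSecondNeg n k
      = ∑ l ∈ range (k + 1), ∑ m ∈ range (n + 1), ∑ j ∈ range (n + 1), A l m j := by
    rw [polyEulerSecondNeg, mul_sum]
    refine sum_congr rfl fun l _ => ?_
    rw [expand_pow, mul_sum, mul_sum]
    refine sum_congr rfl fun m _ => ?_
    rw [pow_eq_sum_stirling' (n - m) l n (Nat.sub_le n m)]
    rw [mul_sum, mul_sum, mul_sum]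
    refine sum_congr rfl fun j _ => ?_
    rw [hA]
    ring
  have step2 : polyEulerSecondNeg n k
      = ∑ j ∈ range (n + 1), ∑ m ∈ range (n + 1), ∑ l ∈ range (k + 1), A l m j := by
    rw [step1]
    calc ∑ l ∈ range (k + 1), ∑ m ∈ range (n + 1), ∑ j ∈ range (n + 1), A l m j
        = ∑ l ∈ range (k + 1), ∑ j ∈ range (n + 1), ∑ m ∈ range (n + 1), A l m j :=
          sum_congr rfl fun l _ => sum_comm
      _ = ∑ j ∈ range (n + 1), ∑ l ∈ range (k + 1), ∑ m ∈ range (n + 1), A l m j := sum_comm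
      _ = _ := sum_congr rfl fun j _ => sum_comm
  have step3 : ∀ j, ∑ m ∈ range (n + 1), ∑ l ∈ range (k + 1), A l m j
      = ∑ m ∈ range (n + 1), ((j.factorial : ℚ) * stirling2 (k + 1) (j + 1))
          * ((n.choose m : ℚ) * ((3 : ℚ) ^ m + 1) * 4 ^ (n - m) * stirling2 (n - m) j
              * (j.factorial : ℚ) / 2) := by
    intro j
    refine sum_congr rfl fun m _ => ?_
    rw [← sum_mul, signed_sum_eq]
  have step4 : polyEulerSecondNeg n k
      = ∑ j ∈ range (min n k + 1), ∑ m ∈ range (n + 1),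
          ((j.factorial : ℚ) * stirling2 (k + 1) (j + 1))
            * ((n.choose m : ℚ) * ((3 : ℚ) ^ m + 1) * 4 ^ (n - m) * stirling2 (n - m) j
                * (j.factorial : ℚ) / 2) := by
    rw [step2, sum_congr rfl fun j _ => step3 j]
    refine (Finset.sum_subset ?_ ?_).symm
    · intro a ha
      rw [mem_range] at *
      omega
    · intro j hj hj'
      rw [mem_range] at hj hj'
      have hjk : k < j := by omega
      have : stirling2 (k + 1) (j + 1) = 0 := stirling2_eq_zero (by omega)
      rw [this]
      simp
  rw [step4]
  refine sum_congr rfl fun j hj => ?_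
  calc ∑ m ∈ range (n + 1), ((j.factorial : ℚ) * stirling2 (k + 1) (j + 1))
          * ((n.choose m : ℚ) * ((3 : ℚ) ^ m + 1) * 4 ^ (n - m) * stirling2 (n - m) j
              * (j.factorial : ℚ) / 2)
      = ∑ m ∈ range (n + 1), ∑ μ ∈ range (k + 1),
          ((j.factorial : ℚ) * ((k.choose μ : ℚ) * stirling2 μ j))
            * ((n.choose m : ℚ) * ((3 : ℚ) ^ m + 1) * 4 ^ (n - m) * stirling2 (n - m) j
                * (j.factorial : ℚ) / 2) := by
        refine sum_congr rfl fun m _ => ?_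
        rw [stirling2_succ_eq_sum, mul_sum, sum_mul]
    _ = (j.factorial : ℚ) ^ 2 * ∑ m ∈ range (n + 1), ∑ μ ∈ range (k + 1),
          (n.choose m : ℚ) * (k.choose μ : ℚ) * stirling2 (n - m) j * stirling2 μ j *
            (4 ^ (n - m) * (3 ^ m + 1) / 2) := by
        rw [mul_sum]
        refine sum_congr rfl fun m _ => ?_
        rw [mul_sum]
        exact sum_congr rfl fun μ _ => by ring

lemma half_cast (m : ℕ) : (((3 ^ m + 1) / 2 : ℕ) : ℚ) = ((3 : ℚ) ^ m + 1) / 2 := by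
  have hodd : Odd ((3 : ℕ) ^ m) := Odd.pow (by decide)
  have h2 : (2 : ℕ) ∣ 3 ^ m + 1 := hodd.add_one.two_dvd
  rw [Nat.cast_div h2 (by norm_num)]
  push_cast
  ring

theorem polyEulerSecondNeg_positivity (n k : ℕ) :
    polyEulerSecondNeg n k =
      ∑ j ∈ Finset.range (min n k + 1),
        (j.factorial : ℚ) ^ 2 *
          ∑ m ∈ Finset.range (n + 1), ∑ μ ∈ Finset.range (k + 1),
            (n.choose m : ℚ) * (k.choose μ : ℚ) * stirling2 (n - m) j * stirling2 μ j *
              (4 ^ (n - m) * (3 ^ m + 1) / 2) ∧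
    ∃ z : ℕ, polyEulerSecondNeg n k = (z : ℚ) := by
  refine ⟨main_identity n k, ?_⟩
  refine ⟨∑ j ∈ Finset.range (min n k + 1),
      (j.factorial) ^ 2 *
        ∑ m ∈ Finset.range (n + 1), ∑ μ ∈ Finset.range (k + 1),
          (n.choose m) * (k.choose μ) * st (n - m) j * st μ j *
            (4 ^ (n - m) * ((3 ^ m + 1) / 2)), ?_⟩
  rw [main_identity n k]
  push_cast
  refine sum_congr rfl fun j _ => ?_
  congr 1
  refine sum_congr rfl fun m _ => ?_
  refine sum_congr rfl fun μ _ => ?_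
  rw [stirling2_eq_st, stirling2_eq_st, half_cast]
  ring
end

section
/- For every prime p > 3 and every nonnegative integer k, Ê_p^{(−k)} ≡ 2^{k+2} − 2 (mod p). -/
open Finset

def Tz (k l : ℕ) : ℤ :=
  ∑ i ∈ Finset.range (l + 1), (-1) ^ (l - i) * (l.choose i : ℤ) * (i : ℤ) ^ k

lemma sum_aux (k l : ℕ) :
    Tz k (l + 1) + Tz k l
      = ∑ j ∈ range (l + 1), (-1) ^ (l - j) * (l.choose j : ℤ) * ((j : ℤ) + 1) ^ k := by
  unfold Tz
  rw [Finset.sum_range_succ' (fun i => (-1 : ℤ) ^ (l + 1 - i) * ((l + 1).choose i : ℤ) * (i : ℤ) ^ k) (l + 1),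
      Finset.sum_range_succ' (fun i => (-1 : ℤ) ^ (l - i) * (l.choose i : ℤ) * (i : ℤ) ^ k) l]
  have hsplit : ∀ i ∈ range (l + 1),
      (-1 : ℤ) ^ (l + 1 - (i + 1)) * ((l + 1).choose (i + 1) : ℤ) * ((i + 1 : ℕ) : ℤ) ^ k
        = (-1) ^ (l - i) * (l.choose i : ℤ) * ((i : ℤ) + 1) ^ k
          + (-1) ^ (l - i) * (l.choose (i + 1) : ℤ) * ((i : ℤ) + 1) ^ k := by
    intro i _
    rw [Nat.succ_sub_succ, Nat.choose_succ_succ]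
    push_cast
    ring
  rw [Finset.sum_congr rfl hsplit, Finset.sum_add_distrib]
  have hB : ∑ i ∈ range (l + 1), (-1 : ℤ) ^ (l - i) * (l.choose (i + 1) : ℤ) * ((i : ℤ) + 1) ^ k
      = - ∑ i ∈ range l, (-1 : ℤ) ^ (l - (i + 1)) * (l.choose (i + 1) : ℤ) * ((i + 1 : ℕ) : ℤ) ^ k := by
    rw [Finset.sum_range_succ, Nat.choose_succ_self]
    simp only [Nat.cast_zero, mul_zero, zero_mul, add_zero]
    rw [← Finset.sum_neg_distrib]
    refine Finset.sum_congr rfl fun i hi => ?_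
    have hil : i < l := Finset.mem_range.mp hi
    have h1 : l - i = (l - (i + 1)) + 1 := by omega
    rw [h1, pow_succ]
    push_cast
    ring
  rw [hB]
  have h0 : ((-1 : ℤ)) ^ (l + 1 - 0) = -(-1) ^ (l - 0) := by
    rw [Nat.sub_zero, Nat.sub_zero, pow_succ]; ring
  rw [h0]
  simp only [Nat.choose_zero_right, Nat.cast_one]
  ring

lemma Tz_succ_succ (k l : ℕ) :
    Tz (k + 1) (l + 1) = ((l : ℤ) + 1) * (Tz k (l + 1) + Tz k l) := by
  rw [sum_aux]
  show (∑ i ∈ Finset.range (l + 1 + 1), (-1 : ℤ) ^ (l + 1 - i) * ((l + 1).choose i : ℤ) * (i : ℤ) ^ (k + 1)) = _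
  rw [Finset.sum_range_succ' (fun i => (-1 : ℤ) ^ (l + 1 - i) * ((l + 1).choose i : ℤ) * (i : ℤ) ^ (k + 1)) (l + 1),
      Finset.mul_sum]
  have : ∀ i ∈ range (l + 1),
      (-1 : ℤ) ^ (l + 1 - (i + 1)) * ((l + 1).choose (i + 1) : ℤ) * ((i + 1 : ℕ) : ℤ) ^ (k + 1)
        = ((l : ℤ) + 1) * ((-1) ^ (l - i) * (l.choose i : ℤ) * ((i : ℤ) + 1) ^ k) := by
    intro i _
    have h := Nat.add_one_mul_choose_eq l i
    have h' : ((l + 1) * l.choose i : ℤ) = ((l + 1).choose (i + 1) * (i + 1) : ℤ) := by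
      exact_mod_cast congrArg (Nat.cast : ℕ → ℤ) h
    rw [Nat.succ_sub_succ]
    push_cast at h' ⊢
    rw [pow_succ]
    linear_combination (-((-1 : ℤ) ^ (l - i) * ((i : ℤ) + 1) ^ k)) * h'
  rw [Finset.sum_congr rfl this]
  simp

lemma Tz_zero_right (k : ℕ) : Tz (k + 1) 0 = 0 := by
  simp [Tz]

lemma Tz_zero_left (l : ℕ) : Tz 0 (l + 1) = 0 := by
  unfold Tz
  have : ∀ i ∈ range (l + 2),
      (-1 : ℤ) ^ (l + 1 - i) * ((l + 1).choose i : ℤ) * (i : ℤ) ^ 0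
        = (-1) ^ (l + 1) * ((-1) ^ i * ((l + 1).choose i : ℤ)) := by
    intro i hi
    have hi' : i ≤ l + 1 := Nat.lt_succ_iff.mp (Finset.mem_range.mp hi)
    have : (-1 : ℤ) ^ (l + 1 - i) * (-1) ^ i = (-1) ^ (l + 1) := by
      rw [← pow_add]; congr 1; omega
    rw [pow_zero, mul_one]
    calc (-1 : ℤ) ^ (l + 1 - i) * ((l + 1).choose i : ℤ)
        = ((-1 : ℤ) ^ (l + 1 - i) * (-1) ^ i) * ((-1) ^ i * ((l + 1).choose i : ℤ)) := by
          have h2 : (-1 : ℤ) ^ i * (-1) ^ i = 1 := by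
            rw [← pow_add, ← two_mul, pow_mul]; norm_num
          linear_combination (-((-1 : ℤ) ^ (l + 1 - i) * (((l + 1).choose i : ℤ)))) * h2
      _ = (-1 : ℤ) ^ (l + 1) * ((-1) ^ i * ((l + 1).choose i : ℤ)) := by rw [this]
  rw [Finset.sum_congr rfl this, ← Finset.mul_sum, Int.alternating_sum_range_choose]
  simp

lemma Tz_vanish : ∀ k l : ℕ, k < l → Tz k l = 0 := by
  intro k
  induction k with
  | zero => intro l hl; obtain ⟨m, rfl⟩ := Nat.exists_eq_add_of_lt hl; simpa using Tz_zero_left m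
  | succ k ih =>
    intro l hl
    obtain ⟨m, rfl⟩ : ∃ m, l = m + 1 := ⟨l - 1, by omega⟩
    rw [Tz_succ_succ, ih (m + 1) (by omega), ih m (by omega)]
    ring

lemma shift_sum (k : ℕ) (w : ℕ → ℤ) (hw0 : w 0 = 0) :
    ∑ m ∈ range (k + 1), w (m + 1) * Tz k (m + 1) = ∑ l ∈ range (k + 1), w l * Tz k l := by
  have h := Finset.sum_range_succ' (fun l => w l * Tz k l) (k + 1)
  rw [Finset.sum_range_succ (fun l => w l * Tz k l) (k + 1)] at h
  simp only [hw0, zero_mul, add_zero, Tz_vanish k (k + 1) (by omega), mul_zero] at h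
  exact h.symm

lemma shift1 (k : ℕ) :
    ∑ m ∈ range (k + 1), (-1 : ℤ) ^ (m + 1) * ((m : ℤ) + 1) * Tz k (m + 1)
      = ∑ l ∈ range (k + 1), (-1 : ℤ) ^ l * (l : ℤ) * Tz k l := by
  have h := shift_sum k (fun l => (-1 : ℤ) ^ l * (l : ℤ)) (by simp)
  rw [← h]
  refine Finset.sum_congr rfl fun m _ => ?_
  push_cast; ring

lemma shift2 (k : ℕ) :
    ∑ m ∈ range (k + 1), (-1 : ℤ) ^ (m + 1) * (((m : ℤ) + 1) * ((m : ℤ) + 1)) * Tz k (m + 1)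
      = ∑ l ∈ range (k + 1), (-1 : ℤ) ^ l * (l : ℤ) ^ 2 * Tz k l := by
  have h := shift_sum k (fun l => (-1 : ℤ) ^ l * (l : ℤ) ^ 2) (by simp)
  rw [← h]
  refine Finset.sum_congr rfl fun m _ => ?_
  push_cast; ring

lemma S0S1 (k : ℕ) :
    (∑ l ∈ range (k + 1), (-1 : ℤ) ^ l * Tz k l) = (-1) ^ k ∧
    (∑ l ∈ range (k + 1), (-1 : ℤ) ^ l * (l : ℤ) * Tz k l) = (-1) ^ k * (2 ^ k - 1) := by
  induction k with
  | zero => simp [Tz]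
  | succ k ih =>
    obtain ⟨h0, h1⟩ := ih
    have key : ∀ w : ℕ → ℤ,
        ∑ l ∈ range (k + 2), w l * Tz (k + 1) l
          = (∑ m ∈ range (k + 1), (w (m + 1) * ((m : ℤ) + 1)) * Tz k (m + 1))
            + ∑ m ∈ range (k + 1), (w (m + 1) * ((m : ℤ) + 1)) * Tz k m := by
      intro w
      rw [Finset.sum_range_succ' (fun l => w l * Tz (k + 1) l) (k + 1), Tz_zero_right, mul_zero,
        add_zero, ← Finset.sum_add_distrib]
      refine Finset.sum_congr rfl fun m _ => ?_
      rw [Tz_succ_succ]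
      ring
    constructor
    · have h := key (fun l => (-1 : ℤ) ^ l)
      have hA : ∑ m ∈ range (k + 1), (-1 : ℤ) ^ (m + 1) * ((m : ℤ) + 1) * Tz k (m + 1)
          = (-1) ^ k * (2 ^ k - 1) := by rw [shift1, h1]
      have hB : ∑ m ∈ range (k + 1), (-1 : ℤ) ^ (m + 1) * ((m : ℤ) + 1) * Tz k m
          = -((-1) ^ k * (2 ^ k - 1)) - (-1) ^ k := by
        have e : ∀ m ∈ range (k + 1), (-1 : ℤ) ^ (m + 1) * ((m : ℤ) + 1) * Tz k m
            = -((-1 : ℤ) ^ m * (m : ℤ) * Tz k m) + -((-1 : ℤ) ^ m * Tz k m) := by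
          intro m _; rw [pow_succ]; ring
        rw [Finset.sum_congr rfl e, Finset.sum_add_distrib,
          Finset.sum_neg_distrib, Finset.sum_neg_distrib, h0, h1]
        ring
      rw [h, hA, hB]; ring
    · have h := key (fun l => (-1 : ℤ) ^ l * (l : ℤ))
      set S2 := ∑ l ∈ range (k + 1), (-1 : ℤ) ^ l * (l : ℤ) ^ 2 * Tz k l with hS2
      have eA : ∑ m ∈ range (k + 1), (-1 : ℤ) ^ (m + 1) * ((m + 1 : ℕ) : ℤ) * ((m : ℤ) + 1) * Tz k (m + 1)
          = ∑ m ∈ range (k + 1), (-1 : ℤ) ^ (m + 1) * (((m : ℤ) + 1) * ((m : ℤ) + 1)) * Tz k (m + 1) :=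
        Finset.sum_congr rfl fun m _ => by push_cast; ring
      have eB : ∑ m ∈ range (k + 1), (-1 : ℤ) ^ (m + 1) * ((m + 1 : ℕ) : ℤ) * ((m : ℤ) + 1) * Tz k m
          = ∑ m ∈ range (k + 1), (-((-1 : ℤ) ^ m * (m : ℤ) ^ 2 * Tz k m)
              + (-2 * ((-1 : ℤ) ^ m * (m : ℤ) * Tz k m) + -((-1 : ℤ) ^ m * Tz k m))) :=
        Finset.sum_congr rfl fun m _ => by rw [pow_succ]; push_cast; ring
      rw [eA, eB, shift2, ← hS2, Finset.sum_add_distrib, Finset.sum_add_distrib,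
        Finset.sum_neg_distrib, Finset.sum_neg_distrib, ← hS2, ← Finset.mul_sum, h0, h1] at h
      rw [h]; ring

lemma E1 (k : ℕ) :
    ∑ l ∈ range (k + 1), (-1 : ℤ) ^ l * Tz k l * (8 * (l : ℤ) + 4)
      = (-1) ^ k * (2 ^ (k + 3) - 4) := by
  obtain ⟨h0, h1⟩ := S0S1 k
  have e : ∀ l ∈ range (k + 1), (-1 : ℤ) ^ l * Tz k l * (8 * (l : ℤ) + 4)
      = 8 * ((-1 : ℤ) ^ l * (l : ℤ) * Tz k l) + 4 * ((-1 : ℤ) ^ l * Tz k l) := by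
    intro l _; ring
  rw [Finset.sum_congr rfl e, Finset.sum_add_distrib, ← Finset.mul_sum, ← Finset.mul_sum, h0, h1]
  ring

lemma factorial_stirling (k l : ℕ) :
    (l.factorial : ℚ) * stirling2 k l = ((Tz k l : ℤ) : ℚ) := by
  rw [stirling2]
  have hl : (l.factorial : ℚ) ≠ 0 := Nat.cast_ne_zero.mpr (Nat.factorial_ne_zero l)
  have hT : ((Tz k l : ℤ) : ℚ)
      = ∑ i ∈ Finset.range (l + 1), (-1) ^ (l - i) * (l.choose i : ℚ) * (i : ℚ) ^ k := by
    rw [Tz]; push_cast; ring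
  rw [hT]
  field_simp

lemma polyEuler_eq (n k : ℕ) :
    polyEulerSecondNeg n k
      = ((-1) ^ k / 2) *
          ((∑ l ∈ range (k + 1), (-1 : ℤ) ^ l * Tz k l *
              ((4 * (l : ℤ) + 3) ^ n + (4 * (l : ℤ) + 1) ^ n) : ℤ) : ℚ) := by
  rw [polyEulerSecondNeg]
  congr 1
  push_cast
  refine Finset.sum_congr rfl fun l _ => ?_
  have h := factorial_stirling k l
  linear_combination ((-1 : ℚ) ^ l * ((4 * (l : ℚ) + 3) ^ n + (4 * (l : ℚ) + 1) ^ n)) * h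

lemma dvd_D (p : ℕ) (hp : Nat.Prime p) (hp3 : 3 < p) (l : ℕ) :
    (2 * (p : ℤ)) ∣ ((4 * (l : ℤ) + 3) ^ p + (4 * (l : ℤ) + 1) ^ p - (8 * (l : ℤ) + 4)) := by
  haveI : Fact p.Prime := ⟨hp⟩
  have hpd : (p : ℤ) ∣ ((4 * (l : ℤ) + 3) ^ p + (4 * (l : ℤ) + 1) ^ p - (8 * (l : ℤ) + 4)) := by
    rw [← ZMod.intCast_zmod_eq_zero_iff_dvd]
    push_cast
    rw [ZMod.pow_card, ZMod.pow_card]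
    ring
  have h2 : (2 : ℤ) ∣ ((4 * (l : ℤ) + 3) ^ p + (4 * (l : ℤ) + 1) ^ p - (8 * (l : ℤ) + 4)) := by
    have := ZMod.intCast_zmod_eq_zero_iff_dvd
      ((4 * (l : ℤ) + 3) ^ p + (4 * (l : ℤ) + 1) ^ p - (8 * (l : ℤ) + 4)) 2
    rw [show (2 : ℤ) = ((2 : ℕ) : ℤ) by norm_num, ← this]
    push_cast
    have h4 : (4 : ZMod 2) = 0 := by decide
    have h8 : (8 : ZMod 2) = 0 := by decide
    have h3 : (3 : ZMod 2) = 1 := by decide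
    rw [h4, h8, h3]
    simp
    decide
  obtain ⟨e, he⟩ := h2
  have hpe : (p : ℤ) ∣ e := by
    have hpp : Prime (p : ℤ) := Nat.prime_iff_prime_int.mp hp
    rcases (hpp.dvd_mul.mp (he ▸ hpd)) with h | h
    · exfalso
      have : (p : ℤ) ∣ ((2 : ℕ) : ℤ) := by exact_mod_cast h
      have := Nat.le_of_dvd (by norm_num) (Int.ofNat_dvd.mp this)
      omega
    · exact h
  obtain ⟨w, hw⟩ := hpe
  exact ⟨w, by rw [he, hw]; ring⟩

theorem polyEulerSecondNeg_prime_congr (p : ℕ) (hp : Nat.Prime p) (hp3 : 3 < p) (k : ℕ) :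
    ∃ z : ℤ, polyEulerSecondNeg p k - (2 ^ (k + 2) - 2) = (p : ℚ) * (z : ℚ) := by
  have hsplit : (∑ l ∈ range (k + 1), (-1 : ℤ) ^ l * Tz k l *
        ((4 * (l : ℤ) + 3) ^ p + (4 * (l : ℤ) + 1) ^ p))
      = (-1) ^ k * (2 ^ (k + 3) - 4)
        + ∑ l ∈ range (k + 1), (-1 : ℤ) ^ l * Tz k l *
            ((4 * (l : ℤ) + 3) ^ p + (4 * (l : ℤ) + 1) ^ p - (8 * (l : ℤ) + 4)) := by
    rw [← E1 k, ← Finset.sum_add_distrib]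
    exact Finset.sum_congr rfl fun l _ => by ring
  have hdvd : (2 * (p : ℤ)) ∣ ∑ l ∈ range (k + 1), (-1 : ℤ) ^ l * Tz k l *
      ((4 * (l : ℤ) + 3) ^ p + (4 * (l : ℤ) + 1) ^ p - (8 * (l : ℤ) + 4)) :=
    Finset.dvd_sum fun l _ => Dvd.dvd.mul_left (dvd_D p hp hp3 l) _
  obtain ⟨W, hW⟩ := hdvd
  refine ⟨(-1) ^ k * W, ?_⟩
  rw [polyEuler_eq, hsplit, hW]
  have hA : ((-1 : ℚ) ^ k) * ((-1 : ℚ) ^ k) = 1 := by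
    rw [← pow_add, ← two_mul, pow_mul]; norm_num
  push_cast
  linear_combination ((2 : ℚ) ^ (k + 2) - 2) * hA
end
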